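/- If π is a compatible permutation with (q,a), then h_v · h_{π·v} = 1 for all v ∈ ℤ^n. -/

import Mathlib

open scoped BigOperators

noncomputable section

/-- The structure coefficient `q^⟨u|v⟩ = ∏_{i<j} q_{ij}^{u_j v_i}` for `u v : Fin n → ℤ`. -/
def qpowZ {K : Type*} [Field K] {n : ℕ} (q : Fin n → Fin n → K) (u v : Fin n → ℤ) : K :=
  ∏ i : Fin n, ∏ j : Fin n, if i < j then q i j ^ (u j * v i) else 1

/-- `h_v = q^⟨a-1-v|v⟩ · (q^⟨v|a-1-v⟩)⁻¹`. -/
def hCoef {K : Type*} [Field K] {n : ℕ} (q : Fin n → Fin n → K) (a : Fin n → ℕ)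
    (v : Fin n → ℤ) : K :=
  qpowZ q (fun i => (a i : ℤ) - 1 - v i) v *
    (qpowZ q v (fun i => (a i : ℤ) - 1 - v i))⁻¹

/-- The action of a permutation `π` on `ℤ^n`: `(π·v)_i = v_{π⁻¹(i)}`. -/
def pAct {n : ℕ} (π : Equiv.Perm (Fin n)) (v : Fin n → ℤ) : Fin n → ℤ :=
  fun i => v (π.symm i)

/-- `π` is a compatible permutation with `(q, a)`. -/
def Compatible {K : Type*} [Field K] {n : ℕ} (q : Fin n → Fin n → K) (a : Fin n → ℕ)
    (π : Equiv.Perm (Fin n)) : Prop :=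
  (∀ i, a (π i) = a i) ∧ (∀ i j, q (π i) (π j) = q j i)

private lemma sigma_invol {n : ℕ} (π : Equiv.Perm (Fin n)) :
    Function.Involutive (fun p : Fin n × Fin n =>
      if ((π p.1 < π p.2) ↔ (p.1 < p.2)) then p else p.swap) := by
  classical
  intro p
  dsimp only
  by_cases h : (π p.1 < π p.2) ↔ (p.1 < p.2)
  · simp [h]
  · rw [if_neg h]
    have hns : ¬ ((π p.2 < π p.1) ↔ (p.2 < p.1)) := by
      by_cases hA : π p.1 < π p.2
      · have hB : ¬ p.1 < p.2 := fun hb => h ⟨fun _ => hb, fun _ => hA⟩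
        have hne : p.1 ≠ p.2 := fun he => (by simp [he] at hA)
        have hB' : p.2 < p.1 := lt_of_le_of_ne (not_lt.mp hB) (Ne.symm hne)
        exact fun hiff => absurd (hiff.mpr hB') (asymm hA)
      · have hB : p.1 < p.2 := by
          by_contra hb
          exact h ⟨fun ha => absurd ha hA, fun hb' => absurd hb' hb⟩
        have hne : π p.1 ≠ π p.2 := fun he => (by
          have := π.injective he
          exact absurd hB (by simp [this]))
        have hA' : π p.2 < π p.1 := lt_of_le_of_ne (not_lt.mp hA) (Ne.symm hne)
        exact fun hiff => absurd (hiff.mp hA') (asymm hB)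
    simp [hns]

private lemma prod_ite_perm {M : Type*} [CommMonoid M] {n : ℕ} (π : Equiv.Perm (Fin n))
    (G : Fin n → Fin n → M) (hG : ∀ i j, G i j = G j i) :
    (∏ p : Fin n × Fin n, if π p.1 < π p.2 then G p.1 p.2 else 1)
      = ∏ p : Fin n × Fin n, if p.1 < p.2 then G p.1 p.2 else 1 := by
  classical
  rw [← Equiv.prod_comp (sigma_invol π).toPerm
    (fun p : Fin n × Fin n => if p.1 < p.2 then G p.1 p.2 else 1)]
  refine Fintype.prod_congr _ _ fun p => ?_
  simp only [Function.Involutive.coe_toPerm]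
  by_cases h : (π p.1 < π p.2) ↔ (p.1 < p.2)
  · simp only [if_pos h]
    by_cases hb : p.1 < p.2
    · rw [if_pos hb, if_pos (h.mpr hb)]
    · rw [if_neg hb, if_neg (fun ha => hb (h.mp ha))]
  · simp only [if_neg h]
    by_cases hA : π p.1 < π p.2
    · have hB : ¬ p.1 < p.2 := fun hb => h ⟨fun _ => hb, fun _ => hA⟩
      have hne : p.1 ≠ p.2 := fun he => (by simp [he] at hA)
      have hB' : p.2 < p.1 := lt_of_le_of_ne (not_lt.mp hB) (Ne.symm hne)
      rw [if_pos hA]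
      simp only [Prod.fst_swap, Prod.snd_swap]
      rw [if_pos hB', hG]
    · have hB : p.1 < p.2 := by
        by_contra hb
        exact h ⟨fun ha => absurd ha hA, fun hb' => absurd hb' hb⟩
      rw [if_neg hA]
      simp only [Prod.fst_swap, Prod.snd_swap]
      rw [if_neg (asymm hB)]

private lemma core {K : Type*} [Field K] {n : ℕ} (q : Fin n → Fin n → K)
    (hq0 : ∀ i j, q i j ≠ 0) (hqsym : ∀ i j, q i j * q j i = 1)
    (π : Equiv.Perm (Fin n)) (hπq : ∀ i j, q (π i) (π j) = q j i)
    (E : Fin n → Fin n → ℤ) (hE : ∀ i j, E j i = - E i j) :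
    (∏ p : Fin n × Fin n, if p.1 < p.2 then q p.1 p.2 ^ E p.1 p.2 else 1) *
      (∏ p : Fin n × Fin n, if p.1 < p.2 then q p.1 p.2 ^ E (π.symm p.1) (π.symm p.2) else 1)
      = 1 := by
  classical
  have hinv : ∀ i j, q j i = (q i j)⁻¹ := fun i j =>
    (inv_eq_of_mul_eq_one_right (hqsym i j)).symm
  have hGsym : ∀ i j, q j i ^ E i j = q i j ^ E j i := by
    intro i j
    rw [hinv i j, hE i j, zpow_neg, inv_zpow]
  have hstep : (∏ p : Fin n × Fin n,
        if p.1 < p.2 then q p.1 p.2 ^ E (π.symm p.1) (π.symm p.2) else 1)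
      = ∏ p : Fin n × Fin n, if p.1 < p.2 then q p.2 p.1 ^ E p.1 p.2 else 1 := by
    rw [← Equiv.prod_comp (Equiv.prodCongr π π)
      (fun p : Fin n × Fin n => if p.1 < p.2 then q p.1 p.2 ^ E (π.symm p.1) (π.symm p.2) else 1)]
    have e1 : ∀ p : Fin n × Fin n,
        (fun p : Fin n × Fin n =>
          if p.1 < p.2 then q p.1 p.2 ^ E (π.symm p.1) (π.symm p.2) else 1)
          ((Equiv.prodCongr π π) p)
        = (fun p : Fin n × Fin n =>
            if π p.1 < π p.2 then (fun i j => q j i ^ E i j) p.1 p.2 else 1) p := by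
      intro p
      simp [hπq]
    rw [Fintype.prod_congr _ _ e1]
    exact prod_ite_perm π (fun i j => q j i ^ E i j) (fun i j => hGsym i j)
  rw [hstep, ← Finset.prod_mul_distrib]
  refine Finset.prod_eq_one fun p _ => ?_
  split_ifs with h
  · rw [← mul_zpow, hqsym, one_zpow]
  · rw [one_mul]

theorem stmt10 {K : Type*} [Field K] {n : ℕ} (hn : 1 ≤ n)
    (q : Fin n → Fin n → K) (a : Fin n → ℕ)
    (hq0 : ∀ i j, q i j ≠ 0) (hqii : ∀ i, q i i = 1)
    (hqsym : ∀ i j, q i j * q j i = 1) (ha : ∀ i, 2 ≤ a i)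
    (π : Equiv.Perm (Fin n)) (hcomp : Compatible q a π)
    (v : Fin n → ℤ) :
    hCoef q a v * hCoef q a (pAct π v) = 1 := by
  classical
  obtain ⟨hπa, hπq⟩ := hcomp
  set w : Fin n → ℤ := fun i => (a i : ℤ) - 1 - v i with hw
  -- Step 1: rewrite hCoef as a single product over pairs
  have key : ∀ x : Fin n → ℤ,
      hCoef q a x = ∏ p : Fin n × Fin n,
        if p.1 < p.2 then q p.1 p.2 ^
          (((a p.2 : ℤ) - 1 - x p.2) * x p.1 - x p.2 * ((a p.1 : ℤ) - 1 - x p.1)) else 1 := by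
    intro x
    rw [hCoef, qpowZ, qpowZ, Fintype.prod_prod_type]
    rw [← Finset.prod_inv_distrib, ← Finset.prod_mul_distrib]
    refine Finset.prod_congr rfl fun i _ => ?_
    rw [← Finset.prod_inv_distrib, ← Finset.prod_mul_distrib]
    refine Finset.prod_congr rfl fun j _ => ?_
    split_ifs with hij
    · rw [← zpow_neg, ← zpow_add₀ (hq0 i j)]
      ring_nf
    · simp
  have ha' : ∀ i, ((a (π.symm i) : ℤ)) = (a i : ℤ) := by
    intro i
    have h := hπa (π.symm i)
    rw [Equiv.apply_symm_apply] at h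
    exact_mod_cast h.symm
  have h2 : hCoef q a (pAct π v) = ∏ p : Fin n × Fin n,
      if p.1 < p.2 then q p.1 p.2 ^
        (((a (π.symm p.2) : ℤ) - 1 - v (π.symm p.2)) * v (π.symm p.1)
          - v (π.symm p.2) * ((a (π.symm p.1) : ℤ) - 1 - v (π.symm p.1))) else 1 := by
    rw [key (pAct π v)]
    refine Finset.prod_congr rfl fun p _ => ?_
    simp only [pAct, ha']
  rw [key v, h2]
  exact core q hq0 hqsym π hπq
    (fun i j => ((a j : ℤ) - 1 - v j) * v i - v j * ((a i : ℤ) - 1 - v i))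
    (fun i j => by ring)
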